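/- The set {(N₁, N₂, N₃, Σ₊, Σ₋) : Σ₋ = 0 and N₂ = N₃} is invariant under the flow of the Wainwright–Hsu system: if a solution satisfies Σ₋(τ₀) = 0 and N₂(τ₀) = N₃(τ₀) at one time, then Σ₋(τ) = 0 and N₂(τ) = N₃(τ) for all τ in its existence interval. -/

import Mathlib

noncomputable def qq (Sp Sm : ℝ → ℝ) (τ : ℝ) : ℝ := 2 * (Sp τ ^ 2 + Sm τ ^ 2)

noncomputable def Spl (N1 N2 N3 : ℝ → ℝ) (τ : ℝ) : ℝ :=
  (1 / 2) * ((N2 τ - N3 τ) ^ 2 - N1 τ * (2 * N1 τ - N2 τ - N3 τ))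

noncomputable def Smi (N1 N2 N3 : ℝ → ℝ) (τ : ℝ) : ℝ :=
  (Real.sqrt 3 / 2) * ((N3 τ - N2 τ) * (N1 τ - N2 τ - N3 τ))

/-- The Wainwright–Hsu vacuum constraint. -/
def Constraint (N1 N2 N3 Sp Sm : ℝ → ℝ) (τ : ℝ) : Prop :=
  Sp τ ^ 2 + Sm τ ^ 2 +
      (3 / 4) * (N1 τ ^ 2 + N2 τ ^ 2 + N3 τ ^ 2 -
        2 * (N1 τ * N2 τ + N2 τ * N3 τ + N3 τ * N1 τ)) = 1

/-- `(N1, N2, N3, Sp, Sm)` solves the Wainwright–Hsu system (with constraint) on `S`. -/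
def IsWHSolutionOn (N1 N2 N3 Sp Sm : ℝ → ℝ) (S : Set ℝ) : Prop :=
  ∀ τ ∈ S,
    HasDerivAt N1 ((qq Sp Sm τ - 4 * Sp τ) * N1 τ) τ ∧
    HasDerivAt N2 ((qq Sp Sm τ + 2 * Sp τ + 2 * Real.sqrt 3 * Sm τ) * N2 τ) τ ∧
    HasDerivAt N3 ((qq Sp Sm τ + 2 * Sp τ - 2 * Real.sqrt 3 * Sm τ) * N3 τ) τ ∧
    HasDerivAt Sp (-(2 - qq Sp Sm τ) * Sp τ - 3 * Spl N1 N2 N3 τ) τ ∧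
    HasDerivAt Sm (-(2 - qq Sp Sm τ) * Sm τ - 3 * Smi N1 N2 N3 τ) τ ∧
    Constraint N1 N2 N3 Sp Sm τ

/-- Forward vanishing lemma via Grönwall: a function with `‖f'‖ ≤ M ‖f‖`
(with `M` continuous) vanishing at `τ₀` vanishes for all `τ ≥ τ₀`. -/
lemma forward_zero (f f' : ℝ → ℝ × ℝ) (M : ℝ → ℝ)
    (hf : ∀ t, HasDerivAt f (f' t) t) (hM : Continuous M)
    (hb : ∀ t, ‖f' t‖ ≤ M t * ‖f t‖) (τ₀ : ℝ) (h0 : f τ₀ = 0) :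
    ∀ τ, τ₀ ≤ τ → f τ = 0 := by
  intro τ hτ
  obtain ⟨x, hx, hxmax⟩ := isCompact_Icc.exists_isMaxOn
    ⟨τ₀, Set.left_mem_Icc.2 hτ⟩ hM.continuousOn
  set K := M x with hK
  have key := norm_le_gronwallBound_of_norm_deriv_right_le (f := f) (f' := f')
    (δ := 0) (K := K) (ε := 0) (a := τ₀) (b := τ)
    (fun t _ => ((hf t).continuousAt).continuousWithinAt)
    (fun t _ => ((hf t).hasDerivWithinAt))
    (by simp [h0]) ?_ τ (Set.right_mem_Icc.2 hτ)
  · rw [gronwallBound_ε0_δ0] at key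
    exact norm_le_zero_iff.1 key
  · intro t ht
    have h1 : ‖f' t‖ ≤ M t * ‖f t‖ := hb t
    have h2 : M t ≤ K := hxmax (Set.mem_Icc_of_Ico ht)
    have : M t * ‖f t‖ ≤ K * ‖f t‖ :=
      mul_le_mul_of_nonneg_right h2 (norm_nonneg _)
    linarith

lemma zero_everywhere (f f' : ℝ → ℝ × ℝ) (M : ℝ → ℝ)
    (hf : ∀ t, HasDerivAt f (f' t) t) (hM : Continuous M)
    (hb : ∀ t, ‖f' t‖ ≤ M t * ‖f t‖) (τ₀ : ℝ) (h0 : f τ₀ = 0) :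
    ∀ τ, f τ = 0 := by
  intro τ
  rcases le_total τ₀ τ with h | h
  · exact forward_zero f f' M hf hM hb τ₀ h0 τ h
  · -- reflect time
    have hrefl : ∀ t, HasDerivAt (fun s => f (2 * τ₀ - s)) (-(f' (2 * τ₀ - t))) t := by
      intro t
      have h1 : HasDerivAt (fun s : ℝ => 2 * τ₀ - s) (-1) t := by
        simpa using ((hasDerivAt_id t).const_sub (2 * τ₀))
      simpa [Function.comp_def] using HasDerivAt.scomp t (hf (2 * τ₀ - t)) h1
    have := forward_zero (fun s => f (2 * τ₀ - s)) (fun s => -(f' (2 * τ₀ - s)))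
      (fun s => M (2 * τ₀ - s)) hrefl
      (hM.comp (by continuity))
      (fun t => by simpa using hb (2 * τ₀ - t))
      τ₀ (by show f (2 * τ₀ - τ₀) = 0; rw [show 2 * τ₀ - τ₀ = τ₀ by ring]; exact h0)
      (2 * τ₀ - τ) (by linarith)
    simpa using this

/-- The set `{Σ₋ = 0, N₂ = N₃}` is invariant under the Wainwright–Hsu flow. -/
theorem stmt_13 (N1 N2 N3 Sp Sm : ℝ → ℝ)
    (hsol : IsWHSolutionOn N1 N2 N3 Sp Sm Set.univ)
    (τ₀ : ℝ) (hSm : Sm τ₀ = 0) (hN : N2 τ₀ = N3 τ₀) :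
    ∀ τ : ℝ, Sm τ = 0 ∧ N2 τ = N3 τ := by
  have hsol' := fun t => hsol t (Set.mem_univ t)
  have cN1 : Continuous N1 :=
    continuous_iff_continuousAt.2 fun t => (hsol' t).1.continuousAt
  have cN2 : Continuous N2 :=
    continuous_iff_continuousAt.2 fun t => (hsol' t).2.1.continuousAt
  have cN3 : Continuous N3 :=
    continuous_iff_continuousAt.2 fun t => (hsol' t).2.2.1.continuousAt
  have cSp : Continuous Sp :=
    continuous_iff_continuousAt.2 fun t => (hsol' t).2.2.2.1.continuousAt
  have cSm : Continuous Sm :=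
    continuous_iff_continuousAt.2 fun t => (hsol' t).2.2.2.2.1.continuousAt
  set f : ℝ → ℝ × ℝ := fun t => (N2 t - N3 t, Sm t) with hfdef
  set f' : ℝ → ℝ × ℝ := fun t =>
    ((qq Sp Sm t + 2 * Sp t + 2 * Real.sqrt 3 * Sm t) * N2 t -
      (qq Sp Sm t + 2 * Sp t - 2 * Real.sqrt 3 * Sm t) * N3 t,
     -(2 - qq Sp Sm t) * Sm t - 3 * Smi N1 N2 N3 t) with hf'def
  have hf : ∀ t, HasDerivAt f (f' t) t := fun t =>
    (((hsol' t).2.1.sub (hsol' t).2.2.1)).prodMk (hsol' t).2.2.2.2.1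
  set A : ℝ → ℝ := fun t => qq Sp Sm t + 2 * Sp t with hA
  set B : ℝ → ℝ := fun t => 2 * Real.sqrt 3 * (N2 t + N3 t) with hB
  set C : ℝ → ℝ := fun t => 3 * (Real.sqrt 3 / 2) * (N1 t - N2 t - N3 t) with hC
  set D : ℝ → ℝ := fun t => 2 - qq Sp Sm t with hD
  set M : ℝ → ℝ := fun t => |A t| + |B t| + |C t| + |D t| with hM
  have cq : Continuous (qq Sp Sm) := by
    unfold qq; fun_prop
  have cM : Continuous M := by
    simp only [hM, hA, hB, hC, hD]
    fun_prop
  have hbound : ∀ t, ‖f' t‖ ≤ M t * ‖f t‖ := by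
    intro t
    have hX1 : |N2 t - N3 t| ≤ ‖f t‖ := by
      rw [Prod.norm_def]; exact le_max_of_le_left (le_of_eq (Real.norm_eq_abs _).symm)
    have hX2 : |Sm t| ≤ ‖f t‖ := by
      rw [Prod.norm_def]; exact le_max_of_le_right (le_of_eq (Real.norm_eq_abs _).symm)
    have hXnn : (0:ℝ) ≤ ‖f t‖ := norm_nonneg _
    have e1 : (qq Sp Sm t + 2 * Sp t + 2 * Real.sqrt 3 * Sm t) * N2 t -
        (qq Sp Sm t + 2 * Sp t - 2 * Real.sqrt 3 * Sm t) * N3 t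
        = A t * (N2 t - N3 t) + B t * Sm t := by
      simp only [hA, hB]; ring
    have e2 : -(2 - qq Sp Sm t) * Sm t - 3 * Smi N1 N2 N3 t
        = C t * (N2 t - N3 t) + (-(D t)) * Sm t := by
      simp only [hC, hD, Smi]; ring
    have key : ∀ a b : ℝ, |a * (N2 t - N3 t) + b * Sm t| ≤ (|a| + |b|) * ‖f t‖ := by
      intro a b
      calc |a * (N2 t - N3 t) + b * Sm t| ≤ |a * (N2 t - N3 t)| + |b * Sm t| := abs_add_le _ _
        _ = |a| * |N2 t - N3 t| + |b| * |Sm t| := by rw [abs_mul, abs_mul]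
        _ ≤ |a| * ‖f t‖ + |b| * ‖f t‖ := by
            exact add_le_add (mul_le_mul_of_nonneg_left hX1 (abs_nonneg a))
              (mul_le_mul_of_nonneg_left hX2 (abs_nonneg b))
        _ = (|a| + |b|) * ‖f t‖ := by ring
    have h1 : |(f' t).1| ≤ (|A t| + |B t|) * ‖f t‖ := by
      rw [hf'def]; dsimp only; rw [e1]; exact key _ _
    have h2 : |(f' t).2| ≤ (|C t| + |D t|) * ‖f t‖ := by
      rw [hf'def]; dsimp only; rw [e2]
      simpa [abs_neg] using key (C t) (-(D t))
    rw [Prod.norm_def, Real.norm_eq_abs, Real.norm_eq_abs]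
    have hcd : (0:ℝ) ≤ (|C t| + |D t|) := by positivity
    have hab : (0:ℝ) ≤ (|A t| + |B t|) := by positivity
    apply max_le
    · calc |(f' t).1| ≤ (|A t| + |B t|) * ‖f t‖ := h1
        _ ≤ M t * ‖f t‖ := by
            have hMt : M t = |A t| + |B t| + |C t| + |D t| := rfl
            rw [hMt]; nlinarith [mul_nonneg hcd hXnn]
    · calc |(f' t).2| ≤ (|C t| + |D t|) * ‖f t‖ := h2
        _ ≤ M t * ‖f t‖ := by
            have hMt : M t = |A t| + |B t| + |C t| + |D t| := rfl
            rw [hMt]; nlinarith [mul_nonneg hab hXnn]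
  have h0 : f τ₀ = 0 := by simp [hfdef, hSm, hN]
  have hz := zero_everywhere f f' M hf cM hbound τ₀ h0
  intro τ
  have := hz τ
  rw [hfdef] at this
  have h1 : N2 τ - N3 τ = 0 := congrArg Prod.fst this
  have h2 : Sm τ = 0 := congrArg Prod.snd this
  exact ⟨h2, by linarith⟩
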